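/- Let G be a continuous semigroup on a metric space (X, d) such that every element of G is uniformly continuous. Then the set CR(G) of chain recurrent points for G is an invariant subset of X (without assuming that G is abelian). -/
import Mathlib


/-- An `(ε, g)`-chain from `a` to `b` for the semigroup `G` on a metric space `X`:
a finite sequence `a = x₀, …, xₙ = b` (with `n ≥ 1`) together with maps
`g₀, …, g_{n-1} ∈ Ĝ = G ∪ {identity}` such that `d(gᵢ(g(xᵢ)), x_{i+1}) < ε` for each `i`. -/
def EpsChain {X : Type*} [MetricSpace X] (G : Set (X → X)) (ε : ℝ) (g : X → X)
    (a b : X) : Prop :=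
  ∃ n : ℕ, 0 < n ∧ ∃ x : Fin (n + 1) → X, ∃ gs : Fin n → X → X,
    x 0 = a ∧ x (Fin.last n) = b ∧
    ∀ i : Fin n, gs i ∈ G ∪ {(id : X → X)} ∧ dist (gs i (g (x i.castSucc))) (x i.succ) < ε

/-- `x` is a chain recurrent point for `G`: for every `ε > 0` and every `g ∈ G` there is an
`(ε, g)`-chain from `x` to itself. -/
def ChainRecurrent {X : Type*} [MetricSpace X] (G : Set (X → X)) (x : X) : Prop :=
  ∀ ε > 0, ∀ g ∈ G, EpsChain G ε g x x

/-- If `G` is a semigroup of uniformly continuous self-maps of a metric space `(X, d)`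
(not assumed abelian), then the set `CR(G)` of chain recurrent points for `G` is an
invariant subset of `X`. -/
theorem chainRecurrent_invariant_of_uniformContinuous {X : Type*} [MetricSpace X]
    (G : Set (X → X))
    (hucont : ∀ g ∈ G, UniformContinuous g)
    (hcomp : ∀ g ∈ G, ∀ h ∈ G, g ∘ h ∈ G) :
    ∀ g ∈ G, ∀ x ∈ {x | ChainRecurrent G x}, g x ∈ {x | ChainRecurrent G x} := by
  intro g hg x hx
  intro ε hε h hh
  obtain ⟨δ, hδ, hgδ⟩ := (Metric.uniformContinuous_iff.mp (hucont g hg)) ε hε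
  obtain ⟨n, hn, y, gs, hy0, hyn, hchain⟩ := hx δ hδ (h ∘ g) (hcomp h hh g hg)
  refine ⟨n, hn, fun i => g (y i), fun i => g ∘ gs i, by simp [hy0], by simp [hyn], fun i => ?_⟩
  obtain ⟨hgs, hd⟩ := hchain i
  constructor
  · rcases hgs with hmem | hid
    · exact Or.inl (hcomp g hg (gs i) hmem)
    · simp only [Set.mem_singleton_iff] at hid
      exact Or.inl (by simp only [hid]; simpa [Function.comp_def] using hg)
  · exact hgδ hd
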